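/- Let J ⊆ Δ_af be a regular subset, w ∈ W, and β ∈ Φ⁺_J with w⁻¹β ∈ Φ⁻. Then the semi-affine length satisfies ᴶℓ(s_β w) < ᴶℓ(w), where ᴶℓ(u) := #{γ ∈ Φ⁺_J : u⁻¹γ ∈ Φ⁻}. -/

import Mathlib

open Classical

/-- A reduced crystallographic root system with a chosen positive system,
inside a `ℚ`-vector space `V`.  `pairing α β` is `⟨α^∨, β⟩`. -/
structure RootSystemData (V : Type*) [AddCommGroup V] [Module ℚ V] where
  Φ : Set V
  finite : Φ.Finite
  pairing : V → Module.Dual ℚ V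
  zero_not_mem : (0 : V) ∉ Φ
  neg_mem : ∀ α ∈ Φ, -α ∈ Φ
  pairing_self : ∀ α ∈ Φ, pairing α α = 2
  pairing_int : ∀ α ∈ Φ, ∀ β ∈ Φ, ∃ n : ℤ, pairing α β = (n : ℚ)
  reflect_mem : ∀ α ∈ Φ, ∀ β ∈ Φ, β - pairing α β • α ∈ Φ
  reduced : ∀ α ∈ Φ, ∀ c : ℚ, c • α ∈ Φ → c = 1 ∨ c = -1
  pos : Set V
  pos_sub : pos ⊆ Φ
  mem_pos_or_neg : ∀ α ∈ Φ, α ∈ pos ∨ -α ∈ pos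
  not_pos_and_neg : ∀ α ∈ pos, -α ∉ pos
  pos_add : ∀ α ∈ pos, ∀ β ∈ pos, α + β ∈ Φ → α + β ∈ pos

namespace RootSystemData

variable {V : Type*} [AddCommGroup V] [Module ℚ V] (R : RootSystemData V)

/-- The reflection `s_α` as a linear endomorphism of `V`. -/
noncomputable def refl (α : V) : Module.End ℚ V := 1 - (R.pairing α).smulRight α

/-- Indicator function `Φ⁺` of the positive roots. -/
noncomputable def ind (β : V) : ℤ := if β ∈ R.pos then 1 else 0

/-- `2ρ`, the sum of the positive roots. -/
noncomputable def twoRho : V := ∑ᶠ α ∈ R.pos, α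

/-- The length of a (Weyl group) element: the number of positive roots sent to
negative roots. -/
noncomputable def len (f : Module.End ℚ V) : ℕ := {α | α ∈ R.pos ∧ f α ∉ R.pos}.ncard

/-- `f` belongs to the Weyl group, i.e. is a product of reflections. -/
def IsWeyl (f : Module.End ℚ V) : Prop :=
  f ∈ Submonoid.closure {g : Module.End ℚ V | ∃ α ∈ R.pos, g = R.refl α}

/-- A quantum root: `ℓ(s_α) = ⟨α^∨, 2ρ⟩ - 1`. -/
def IsQuantumRoot (α : V) : Prop :=
  α ∈ R.pos ∧ (R.len (R.refl α) : ℚ) = R.pairing α R.twoRho - 1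

/-- Edges of the quantum Bruhat graph `QB(W)`, together with their weights:
a Bruhat edge `w → w s_α` of weight `0` when `ℓ(w s_α) = ℓ(w) + 1`, and a
quantum edge of weight `α^∨` when `ℓ(w s_α) = ℓ(w) + 1 - ⟨α^∨, 2ρ⟩`. -/
def Edge (u v : Module.End ℚ V) (ω : Module.Dual ℚ V) : Prop :=
  ∃ α ∈ R.pos, v = u * R.refl α ∧
    ((R.len v = R.len u + 1 ∧ ω = 0) ∨
     ((R.len v : ℚ) = (R.len u : ℚ) + 1 - R.pairing α R.twoRho ∧ ω = R.pairing α))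

/-- Paths in the quantum Bruhat graph; `Path R u v ω n` means there is a path
from `u` to `v` with `n` edges and total weight `ω`. -/
inductive Path (R : RootSystemData V) :
    Module.End ℚ V → Module.End ℚ V → Module.Dual ℚ V → ℕ → Prop
  | nil (u : Module.End ℚ V) : Path R u u 0 0
  | cons {u v w : Module.End ℚ V} {ω' ω : Module.Dual ℚ V} {n : ℕ} :
      R.Edge u v ω' → Path R v w ω n → Path R u w (ω' + ω) (n + 1)

/-- `ω` is the weight `wt(u ⇒ v)` of a shortest path from `u` to `v` in `QB(W)`. -/
def IsWt (u v : Module.End ℚ V) (ω : Module.Dual ℚ V) : Prop :=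
  ∃ n, R.Path u v ω n ∧ ∀ (m : ℕ) (ω' : Module.Dual ℚ V), R.Path u v ω' m → n ≤ m

/-- The distance `d(u ⇒ v)` in the quantum Bruhat graph. -/
noncomputable def qbDist (u v : Module.End ℚ V) : ℕ :=
  sInf {n | ∃ ω, R.Path u v ω n}

/-- The cone of nonnegative integral sums of positive coroots; `μ ≤ ν` in the
coroot lattice iff `ν - μ` lies in this cone. -/
def corootCone : AddSubmonoid (Module.Dual ℚ V) :=
  AddSubmonoid.closure {d | ∃ α ∈ R.pos, d = R.pairing α}

/-- The coroot lattice `ℤΦ^∨`. -/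
def corootLattice : AddSubgroup (Module.Dual ℚ V) :=
  AddSubgroup.closure {d | ∃ α ∈ R.pos, d = R.pairing α}


/-- A positive affine root `(α, k)`: `α ∈ Φ` and `k ≥ Φ⁺(-α)`. -/
def IsPosAff (a : V × ℤ) : Prop := a.1 ∈ R.Φ ∧ R.ind (-a.1) ≤ a.2

/-- A simple affine root: a positive affine root that is not a sum of two
positive affine roots (this characterizes `Δ_af`). -/
def IsSimpleAff (a : V × ℤ) : Prop :=
  R.IsPosAff a ∧ ¬ ∃ b c : V × ℤ, R.IsPosAff b ∧ R.IsPosAff c ∧ a = b + c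

/-- The affine reflection `r_{(α,k)}` acting on affine roots, realized as a
linear endomorphism of `V × ℚ`: `(β, t) ↦ (s_α β, t - k⟨α^∨, β⟩)`. -/
noncomputable def affRefl (a : V × ℤ) : Module.End ℚ (V × ℚ) :=
  LinearMap.prod ((R.refl a.1).comp (LinearMap.fst ℚ V ℚ))
    (LinearMap.snd ℚ V ℚ - (a.2 : ℚ) • ((R.pairing a.1).comp (LinearMap.fst ℚ V ℚ)))

/-- `K` is a regular subset of the simple affine roots `Δ_af`: the group
generated by the corresponding affine reflections is finite. -/
def IsRegularAff (K : Set (V × ℤ)) : Prop :=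
  (∀ a ∈ K, R.IsSimpleAff a) ∧
    Set.Finite ((Submonoid.closure {g : Module.End ℚ (V × ℚ) | ∃ a ∈ K, g = R.affRefl a} :
      Submonoid (Module.End ℚ (V × ℚ))) : Set (Module.End ℚ (V × ℚ)))

/-- The root subsystem `Φ_K` generated by the classical parts `cl(K)`. -/
def subSys (K : Set (V × ℤ)) : Set V :=
  {α | α ∈ R.Φ ∧ α ∈ (AddSubgroup.closure (Prod.fst '' K) : AddSubgroup V)}

/-- The positive roots `Φ⁺_K` of `Φ_K` with respect to the basis `cl(K)`:
roots that are nonnegative integral combinations of `cl(K)`. -/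
def subPos (K : Set (V × ℤ)) : Set V :=
  {α | α ∈ R.Φ ∧ α ∈ (AddSubmonoid.closure (Prod.fst '' K) : AddSubmonoid V)}

/-- `χ_K = Φ⁺ - Φ⁺_K`. -/
noncomputable def chi (K : Set (V × ℤ)) (α : V) : ℤ :=
  R.ind α - (if α ∈ R.subPos K then 1 else 0)

/-- The semi-affine length `ᴶℓ(u) = #{γ ∈ Φ⁺_J : u⁻¹γ ∈ Φ⁻}`, expressed in
terms of the inverse `finv = u⁻¹`. -/
noncomputable def semiAffLen (J : Set (V × ℤ)) (finv : Module.End ℚ V) : ℕ :=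
  {γ | γ ∈ R.subPos J ∧ finv γ ∉ R.pos}.ncard

section MatAux
open Matrix

lemma unip (G : Matrix (Fin 2) (Fin 2) ℚ) (hG : G * G = 0) :
    ∀ p : ℕ, (1 + G) ^ p = 1 + (p : ℚ) • G := by
  intro p
  induction p with
  | zero => simp
  | succ n ih =>
    rw [pow_succ, ih]
    rw [add_mul, one_mul, mul_add, mul_one, smul_mul_assoc, hG]
    push_cast
    rw [add_smul, one_smul, smul_zero]
    abel

lemma matrix_key (k m : ℚ) (p : ℕ) (hp : 0 < p)
    (hpow : (!![m*k-1, k; -m, -1] : Matrix (Fin 2) (Fin 2) ℚ) ^ p = 1)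
    (hk : 1 ≤ k) : 0 < m ∧ m * k < 4 := by
  set M : Matrix (Fin 2) (Fin 2) ℚ := !![m*k-1, k; -m, -1] with hM
  set τ : ℚ := m*k - 2 with hτ
  have hCH : M * M = τ • M - 1 := by
    ext i j
    fin_cases i <;> fin_cases j <;>
      simp [hM, Matrix.mul_apply, Fin.sum_univ_two, Matrix.one_apply, hτ] <;> ring
  set s : ℕ → ℚ := fun j => (M ^ j).trace with hs
  have hs0 : s 0 = 2 := by simp [hs, Matrix.trace_one]
  have hs1 : s 1 = τ := by simp [hs, hM, Matrix.trace_fin_two, hτ]; ring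
  have hrec : ∀ j, s (j+2) = τ * s (j+1) - s j := by
    intro j
    have : M ^ (j+2) = τ • M ^ (j+1) - M ^ j := by
      have e : M ^ (j+2) = M ^ j * (M * M) := by rw [pow_add, pow_two]
      rw [e, hCH, mul_sub, mul_one, mul_smul_comm, ← pow_succ]
    simp [hs, this, Matrix.trace_sub, Matrix.trace_smul, smul_eq_mul]
  have htau : |τ| ≤ 2 := by
    by_contra habs
    push_neg at habs
    have key : ∀ j, |s (j+1)| > |s j| ∧ 2 ≤ |s j| := by
      intro j
      induction j with
      | zero => refine ⟨?_, by rw [hs0]; norm_num⟩; rw [hs0, hs1]; simpa using habs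
      | succ n ih =>
        obtain ⟨ih1, ih2⟩ := ih
        have h2 : 2 ≤ |s (n+1)| := le_of_lt (lt_of_le_of_lt ih2 ih1)
        constructor
        · have : |s (n+2)| ≥ |τ| * |s (n+1)| - |s n| := by
            rw [hrec n]
            calc |τ * s (n+1) - s n| ≥ |τ * s (n+1)| - |s n| := abs_sub_abs_le_abs_sub _ _
              _ = |τ| * |s (n+1)| - |s n| := by rw [abs_mul]
          nlinarith
        · exact h2
    have hfin : s p = 2 := by simp [hs, hpow, Matrix.trace_one]
    have hmono : ∀ j, 0 < j → 2 < |s j| := by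
      intro j hj
      cases j with
      | zero => omega
      | succ n => exact lt_of_le_of_lt (key n).2 (key n).1
    have := hmono p hp
    rw [hfin] at this
    norm_num at this
  have h04 : 0 ≤ m * k ∧ m * k ≤ 4 := by
    rw [abs_le] at htau
    constructor <;> [linarith [htau.1]; linarith [htau.2]]
  have hmpos : 0 < m := by
    by_contra hm
    push_neg at hm
    have hmk0 : m * k ≤ m := by nlinarith
    have hm0 : m = 0 := by nlinarith [h04.1]
    subst hm0
    have hM2 : M * M = 1 + !![0, -2*k; 0, 0] := by
      ext i j
      fin_cases i <;> fin_cases j <;>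
        simp [hM, Matrix.mul_apply, Fin.sum_univ_two, Matrix.one_apply] <;> ring
    have hGG : (!![0, -2*k; 0, 0] : Matrix (Fin 2) (Fin 2) ℚ) * !![0, -2*k; 0, 0] = 0 := by
      ext i j
      fin_cases i <;> fin_cases j <;>
        simp [Matrix.mul_apply, Fin.sum_univ_two]
    have h1 : (M * M) ^ p = 1 := by
      rw [← pow_two, ← pow_mul, mul_comm, pow_mul, hpow, one_pow]
    rw [hM2, unip _ hGG p] at h1
    have h2 := congrFun (congrFun h1 0) 1
    simp [Matrix.one_apply] at h2
    rcases h2 with h | h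
    · omega
    · linarith
  constructor
  · exact hmpos
  · by_contra h4
    push_neg at h4
    have hmk4 : m * k = 4 := le_antisymm h04.2 h4
    have hMF : M = 1 + !![2, k; -m, -2] := by
      ext i j
      fin_cases i <;> fin_cases j <;>
        simp [hM, Matrix.one_apply] <;> linarith
    have hFF : (!![2, k; -m, -2] : Matrix (Fin 2) (Fin 2) ℚ) * !![2, k; -m, -2] = 0 := by
      ext i j
      fin_cases i <;> fin_cases j <;>
        simp [Matrix.mul_apply, Fin.sum_univ_two] <;> linarith
    rw [hMF, unip _ hFF p] at hpow
    have h2 := congrFun (congrFun hpow 0) 0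
    simp [Matrix.one_apply] at h2
    omega
end MatAux

lemma refl_apply (α x : V) : R.refl α x = x - R.pairing α x • α := by
  simp [refl, LinearMap.sub_apply]

lemma refl_refl_self {α : V} (hα : α ∈ R.Φ) (x : V) : R.refl α (R.refl α x) = x := by
  rw [R.refl_apply, R.refl_apply, map_sub, map_smul, R.pairing_self α hα]
  simp only [smul_eq_mul, sub_smul, mul_smul]
  module

lemma refl_self {α : V} (hα : α ∈ R.Φ) : R.refl α α = -α := by
  rw [R.refl_apply, R.pairing_self α hα]
  module

lemma refl_mem {α x : V} (hα : α ∈ R.Φ) (hx : x ∈ R.Φ) : R.refl α x ∈ R.Φ := by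
  rw [R.refl_apply]; exact R.reflect_mem α hα x hx

lemma refl_mul_refl {α : V} (hα : α ∈ R.Φ) : R.refl α * R.refl α = 1 := by
  apply LinearMap.ext
  intro x
  simpa using R.refl_refl_self hα x

/-- powers of `refl β * refl γ` fix `β` and `γ` for some positive exponent. -/
lemma exists_pow_fix {β γ : V} (hβ : β ∈ R.Φ) (hγ : γ ∈ R.Φ) :
    ∃ p : ℕ, 0 < p ∧ ((R.refl β * R.refl γ) ^ p) β = β ∧ ((R.refl β * R.refl γ) ^ p) γ = γ := by
  set N := R.refl β * R.refl γ with hN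
  set N' := R.refl γ * R.refl β with hN'
  have hNΦ : ∀ x ∈ R.Φ, N x ∈ R.Φ := by
    intro x hx
    exact R.refl_mem hβ (R.refl_mem hγ hx)
  have hmem : ∀ j : ℕ, (N ^ j) β ∈ R.Φ ∧ (N ^ j) γ ∈ R.Φ := by
    intro j
    induction j with
    | zero => exact ⟨by simpa using hβ, by simpa using hγ⟩
    | succ n ih =>
      rw [pow_succ']
      exact ⟨hNΦ _ ih.1, hNΦ _ ih.2⟩
  haveI : Finite ↥(R.Φ ×ˢ R.Φ) := (R.finite.prod R.finite).to_subtype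
  obtain ⟨i, j, hne, hij⟩ := Finite.exists_ne_map_eq_of_infinite
    (fun j : ℕ => (⟨((N ^ j) β, (N ^ j) γ), Set.mk_mem_prod (hmem j).1 (hmem j).2⟩ :
        ↥(R.Φ ×ˢ R.Φ)))
  have hij' : (N ^ i) β = (N ^ j) β ∧ (N ^ i) γ = (N ^ j) γ := by
    have := congrArg Subtype.val hij
    exact ⟨congrArg Prod.fst this, congrArg Prod.snd this⟩
  have h1 : N' * N = 1 := by
    rw [hN', hN, mul_assoc, ← mul_assoc (R.refl β), R.refl_mul_refl hβ, one_mul,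
      R.refl_mul_refl hγ]
  have hinv : ∀ d : ℕ, N' ^ d * N ^ d = 1 := by
    intro d
    induction d with
    | zero => simp
    | succ n ih =>
      rw [pow_succ, pow_succ', mul_assoc, ← mul_assoc N' N, h1, one_mul, ih]
  have hcancel : ∀ (d : ℕ) (x y : V), (N ^ d) x = (N ^ d) y → x = y := by
    intro d x y h
    have h2 : (N' ^ d) ((N ^ d) x) = (N' ^ d) ((N ^ d) y) := by rw [h]
    rwa [← Module.End.mul_apply, ← Module.End.mul_apply, hinv d] at h2
  rcases lt_or_gt_of_ne hne with hlt | hlt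
  · refine ⟨j - i, by omega, ?_, ?_⟩
    · apply hcancel i
      rw [← Module.End.mul_apply, ← pow_add, (by omega : i + (j - i) = j)]
      exact hij'.1.symm
    · apply hcancel i
      rw [← Module.End.mul_apply, ← pow_add, (by omega : i + (j - i) = j)]
      exact hij'.2.symm
  · refine ⟨i - j, by omega, ?_, ?_⟩
    · apply hcancel j
      rw [← Module.End.mul_apply, ← pow_add, (by omega : j + (i - j) = i)]
      exact hij'.1
    · apply hcancel j
      rw [← Module.End.mul_apply, ← pow_add, (by omega : j + (i - j) = i)]
      exact hij'.2

lemma pairing_bounds {β γ : V} (hβ : β ∈ R.Φ) (hγ : γ ∈ R.Φ)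
    (hind : ∀ c : ℚ, γ ≠ c • β) (k m : ℤ)
    (hk : R.pairing β γ = (k : ℚ)) (hm : R.pairing γ β = (m : ℚ)) (h1 : 1 ≤ k) :
    1 ≤ m ∧ k * m ≤ 3 := by
  have hβ0 : β ≠ 0 := fun h => R.zero_not_mem (h ▸ hβ)
  -- linear independence
  have hli : ∀ c d : ℚ, c • β + d • γ = 0 → c = 0 ∧ d = 0 := by
    intro c d h
    by_cases hd : d = 0
    · subst hd
      simp only [zero_smul, add_zero] at h
      rcases smul_eq_zero.mp h with hc | hb
      · exact ⟨hc, rfl⟩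
      · exact absurd hb hβ0
    · exfalso
      apply hind (-c / d)
      have : d • γ = (-c) • β := by
        rw [neg_smul]
        linear_combination (norm := module) h
      calc γ = d⁻¹ • (d • γ) := by rw [inv_smul_smul₀ hd]
        _ = (-c / d) • β := by rw [this, smul_smul]; ring_nf
  obtain ⟨p, hp, hfixβ, hfixγ⟩ := R.exists_pow_fix hβ hγ
  set N := R.refl β * R.refl γ with hN
  set Mq : Matrix (Fin 2) (Fin 2) ℚ :=
    !![(m : ℚ) * (k : ℚ) - 1, (k : ℚ); -(m : ℚ), -1] with hMq
  have hpβ : R.pairing β β = 2 := R.pairing_self β hβ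
  have hpγ : R.pairing γ γ = 2 := R.pairing_self γ hγ
  have hNβ : N β = ((m : ℚ) * k - 1) • β + (-(m : ℚ)) • γ := by
    simp only [hN, Module.End.mul_apply, R.refl_apply, map_sub, map_smul, hk, hm, hpβ, hpγ,
      smul_eq_mul]
    module
  have hNγ : N γ = (k : ℚ) • β + (-1 : ℚ) • γ := by
    simp only [hN, Module.End.mul_apply, R.refl_apply, map_sub, map_smul, hk, hm, hpβ, hpγ,
      smul_eq_mul]
    module
  have hcoef : ∀ j : ℕ,
      (N ^ j) β = (Mq ^ j) 0 0 • β + (Mq ^ j) 1 0 • γ ∧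
      (N ^ j) γ = (Mq ^ j) 0 1 • β + (Mq ^ j) 1 1 • γ := by
    intro j
    induction j with
    | zero =>
      constructor <;> simp [Matrix.one_apply]
    | succ n ih =>
      have e : ∀ i' j' : Fin 2, (Mq ^ (n+1)) i' j' =
          Mq i' 0 * (Mq ^ n) 0 j' + Mq i' 1 * (Mq ^ n) 1 j' := by
        intro i' j'
        rw [pow_succ']
        rw [Matrix.mul_apply, Fin.sum_univ_two]
      have hstep : ∀ x : V, ∀ a b : ℚ, x = a • β + b • γ →
          N x = ((m * k - 1) * a + k * b) • β + (-m * a + (-1) * b) • γ := by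
        intro x a b hx
        rw [hx, map_add, map_smul, map_smul, hNβ, hNγ]
        simp only [smul_add, smul_smul]
        module
      constructor
      · rw [pow_succ', Module.End.mul_apply, hstep _ _ _ ih.1, e 0 0, e 1 0]
        simp [hMq]
        try module
      · rw [pow_succ', Module.End.mul_apply, hstep _ _ _ ih.2, e 0 1, e 1 1]
        simp [hMq]
        try module
  have hMp : Mq ^ p = 1 := by
    have h00 := (hcoef p).1
    have h01 := (hcoef p).2
    rw [hfixβ] at h00
    rw [hfixγ] at h01
    have e1 : ((Mq ^ p) 0 0 - 1) • β + ((Mq ^ p) 1 0) • γ = 0 := by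
      rw [sub_smul, one_smul]
      linear_combination (norm := module) h00.symm
    have e2 : ((Mq ^ p) 0 1) • β + ((Mq ^ p) 1 1 - 1) • γ = 0 := by
      rw [sub_smul, one_smul]
      linear_combination (norm := module) h01.symm
    obtain ⟨ha, hb⟩ := hli _ _ e1
    obtain ⟨hc, hd⟩ := hli _ _ e2
    ext i' j'
    fin_cases i' <;> fin_cases j' <;>
      simp [Matrix.one_apply]
    · linarith [sub_eq_zero.mp ha]
    · exact hc
    · exact hb
    · linarith [sub_eq_zero.mp hd]
  have hk' : 1 ≤ (k : ℚ) := by exact_mod_cast h1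
  obtain ⟨hm_pos, hmk4⟩ := matrix_key (k : ℚ) (m : ℚ) p hp (by rw [← hMq]; exact hMp) hk'
  have hm1 : 1 ≤ m := by exact_mod_cast hm_pos
  have : (m : ℚ) * k < 4 := hmk4
  have h4 : m * k < 4 := by exact_mod_cast this
  exact ⟨hm1, by linarith [mul_comm k m]⟩

lemma pairing_neg_self {β : V} (hβ : β ∈ R.Φ) : R.pairing β (-β) = -2 := by
  rw [map_neg, R.pairing_self β hβ]

/-- If `⟨β^∨, γ⟩ ≥ 1` and `γ ≠ β`, then `γ - β` is a root. -/
lemma sub_root {β γ : V} (hβ : β ∈ R.Φ) (hγ : γ ∈ R.Φ) (hne : γ ≠ β)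
    (k : ℤ) (hk : R.pairing β γ = (k : ℚ)) (h1 : 1 ≤ k) : γ - β ∈ R.Φ := by
  by_cases hdep : ∃ c : ℚ, γ = c • β
  · obtain ⟨c, hc⟩ := hdep
    rcases R.reduced β hβ c (hc ▸ hγ) with h | h
    · exact absurd (by rw [hc, h, one_smul]) hne
    · exfalso
      have hγβ : γ = -β := by rw [hc, h, neg_one_smul]
      rw [hγβ, R.pairing_neg_self hβ] at hk
      have hk2 : (k : ℚ) = -2 := hk.symm
      have : k = -2 := by exact_mod_cast hk2
      omega
  · push_neg at hdep
    obtain ⟨m, hm⟩ := R.pairing_int γ hγ β hβ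
    obtain ⟨hm1, hkm⟩ := R.pairing_bounds hβ hγ hdep k m hk hm h1
    rcases eq_or_lt_of_le h1 with h | h
    · have hp1 : R.pairing β γ = 1 := by rw [hk, ← h]; norm_num
      have h2 := R.reflect_mem β hβ γ hγ
      rwa [hp1, one_smul] at h2
    · have hmeq : m = 1 := by nlinarith
      have h2 := R.reflect_mem γ hγ β hβ
      rw [hm, hmeq] at h2
      norm_num at h2
      have h3 := R.neg_mem _ h2
      rwa [neg_sub] at h3

/-- The sum of two negative roots, if a root, is negative. -/
lemma neg_add_neg {x b : V} (hx : x ∈ R.Φ) (hxn : x ∉ R.pos) (hb : b ∈ R.Φ)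
    (hbn : b ∉ R.pos) (hxb : x + b ∈ R.Φ) : x + b ∉ R.pos := by
  intro hpos
  have hnb : -b ∈ R.pos := (R.mem_pos_or_neg b hb).resolve_left hbn
  have := R.pos_add (x + b) hpos (-b) hnb (by simpa using hx)
  simp only [add_neg_cancel_right] at this
  exact hxn this

/-- No nonempty list of positive roots sums to zero. -/
lemma no_zero_sum : ∀ (n : ℕ) (l : List V), l.length ≤ n →
    (∀ x ∈ l, x ∈ R.pos) → l.sum = 0 → l = [] := by
  intro n
  induction n with
  | zero =>
    intro l hl _ _
    exact List.length_eq_zero_iff.mp (by omega)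
  | succ n ih =>
    intro l hl hpos hsum
    cases l with
    | nil => rfl
    | cons α t =>
      exfalso
      have hαp : α ∈ R.pos := hpos α (by simp)
      have hαΦ : α ∈ R.Φ := R.pos_sub hαp
      have h0 : α + t.sum = 0 := by simpa using hsum
      have htsum : t.sum = -α := eq_neg_of_add_eq_zero_right h0
      have hex : ∃ x ∈ t, R.pairing α x ≤ -1 := by
        by_contra hall
        push_neg at hall
        have hnn : ∀ x ∈ t, 0 ≤ R.pairing α x := by
          intro x hxt
          obtain ⟨nx, hnx⟩ := R.pairing_int α hαΦ x (R.pos_sub (hpos x (by simp [hxt])))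
          have h6 := hall x hxt
          rw [hnx] at h6 ⊢
          have h7 : -1 < nx := by exact_mod_cast h6
          have h8 : 0 ≤ nx := by omega
          exact_mod_cast h8
        have hsum2 : (t.map (R.pairing α)).sum = -2 := by
          rw [← map_list_sum, htsum, R.pairing_neg_self hαΦ]
        have h9 : (0 : ℚ) ≤ (t.map (R.pairing α)).sum := by
          apply List.sum_nonneg
          intro q hq
          obtain ⟨x, hxt, rfl⟩ := List.mem_map.mp hq
          exact hnn x hxt
        rw [hsum2] at h9
        norm_num at h9
      obtain ⟨x, hxt, hpx⟩ := hex
      have hxp : x ∈ R.pos := hpos x (by simp [hxt])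
      have hxΦ : x ∈ R.Φ := R.pos_sub hxp
      by_cases hxnα : x = -α
      · exact R.not_pos_and_neg α hαp (hxnα ▸ hxp)
      · obtain ⟨nx, hnx⟩ := R.pairing_int α hαΦ x hxΦ
        have hnx1 : 1 ≤ -nx := by
          rw [hnx] at hpx
          have : nx ≤ -1 := by exact_mod_cast hpx
          omega
        have hroot : -x - α ∈ R.Φ := by
          apply R.sub_root hαΦ (R.neg_mem x hxΦ) ?_ (-nx) ?_ hnx1
          · intro h
            exact hxnα (neg_eq_iff_eq_neg.mp h)
          · rw [map_neg, hnx]; push_cast; ring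
        have hαx : α + x ∈ R.Φ := by
          have h10 := R.neg_mem _ hroot
          simpa [neg_sub, sub_neg_eq_add] using h10
        have hαxp : α + x ∈ R.pos := R.pos_add α hαp x hxp hαx
        have hperm : List.Perm t (x :: t.erase x) := List.perm_cons_erase hxt
        have h5 : t.sum = x + (t.erase x).sum := by rw [hperm.sum_eq]; simp
        rw [htsum] at h5
        have hl'sum : ((α + x) :: t.erase x).sum = 0 := by
          rw [List.sum_cons, add_assoc, ← h5]
          simp
        have hl'pos : ∀ y ∈ (α + x) :: t.erase x, y ∈ R.pos := by
          intro y hy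
          rcases List.mem_cons.mp hy with h | h
          · exact h ▸ hαxp
          · exact hpos y (by simp [List.mem_of_mem_erase h])
        have hl'len : ((α + x) :: t.erase x).length ≤ n := by
          have hel := List.length_erase_of_mem hxt
          have htpos : 1 ≤ t.length := List.length_pos_iff.mpr (List.ne_nil_of_mem hxt)
          simp only [List.length_cons] at hl ⊢
          rw [hel]
          omega
        have := ih _ hl'len hl'pos hl'sum
        simp at this

lemma affRefl_apply (a : V × ℤ) (x : V × ℚ) :
    R.affRefl a x = (R.refl a.1 x.1, x.2 - (a.2 : ℚ) * R.pairing a.1 x.1) := by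
  simp [affRefl, smul_eq_mul]

lemma affRefl_invol {a : V × ℤ} (ha : a.1 ∈ R.Φ) (x : V × ℚ) :
    R.affRefl a (R.affRefl a x) = x := by
  rw [R.affRefl_apply, R.affRefl_apply]
  have h1 : R.refl a.1 (R.refl a.1 x.1) = x.1 := R.refl_refl_self ha x.1
  have h2 : R.pairing a.1 (R.refl a.1 x.1) = - R.pairing a.1 x.1 := by
    rw [R.refl_apply, map_sub, map_smul, R.pairing_self a.1 ha]
    simp only [smul_eq_mul]
    ring
  rw [h1, h2]
  ext <;> simp <;> ring

lemma ind_nonneg (α : V) : 0 ≤ R.ind α := by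
  unfold ind; split <;> norm_num

/-- Regularity of `J` prevents a root and its negative from both lying in `Φ⁺_J`. -/
lemma not_both_subPos {J : Set (V × ℤ)} (hJ : R.IsRegularAff J) {β : V}
    (hβ : β ∈ R.subPos J) (hnβ : -β ∈ R.subPos J) : False := by
  obtain ⟨hβΦ, hβM⟩ := hβ
  obtain ⟨-, hnβM⟩ := hnβ
  have hβ0 : β ≠ 0 := fun h => R.zero_not_mem (h ▸ hβΦ)
  set gens : Set (Module.End ℚ (V × ℚ)) := {g | ∃ a ∈ J, g = R.affRefl a} with hgens
  have hfin : Set.Finite ((Submonoid.closure gens : Submonoid (Module.End ℚ (V × ℚ))) :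
      Set (Module.End ℚ (V × ℚ))) := hJ.2
  have haΦ : ∀ a ∈ J, a.1 ∈ R.Φ := fun a ha => ((hJ.1 a ha).1).1
  have ha2 : ∀ a ∈ J, 0 ≤ a.2 := fun a ha => le_trans (R.ind_nonneg _) ((hJ.1 a ha).1).2
  -- every element of the closure commutes with adding (0, t)
  have hP : ∀ g ∈ Submonoid.closure gens, ∀ (x : V × ℚ) (t : ℚ),
      g (x + (0, t)) = g x + (0, t) := by
    intro g hg
    induction hg using Submonoid.closure_induction with
    | mem g hgen =>
      obtain ⟨a, ha, rfl⟩ := hgen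
      intro x t
      rw [R.affRefl_apply, R.affRefl_apply]
      have : (x + (0, t)).1 = x.1 := by simp
      rw [this]
      ext <;> simp <;> ring
    | one => intro x t; simp
    | mul g h hgm hhm ihg ihh =>
      intro x t
      have h0 : h (0, t) = (0, t) := by
        have := ihh 0 t
        simpa using this
      calc (g * h) (x + (0, t)) = g (h x + (0, t)) := by
            rw [Module.End.mul_apply, ihh x t]
        _ = g (h x) + (0, t) := ihg (h x) t
        _ = (g * h) x + (0, t) := rfl
  set Fn := hfin.toFinset with hFn
  have hmemFn : ∀ g, g ∈ Fn ↔ g ∈ Submonoid.closure gens := fun g => Set.Finite.mem_toFinset hfin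
  have h1G : (1 : Module.End ℚ (V × ℚ)) ∈ Fn := (hmemFn 1).mpr (one_mem _)
  have hNpos : 0 < Fn.card := Finset.card_pos.mpr ⟨1, h1G⟩
  set F : V →ₗ[ℚ] ℚ :=
    ∑ g ∈ Fn, (LinearMap.snd ℚ V ℚ).comp (g ∘ₗ LinearMap.inl ℚ V ℚ) with hF
  have hFapp : ∀ v0 : V, F v0 = ∑ g ∈ Fn, (g (v0, 0)).2 := by
    intro v
    rw [hF]
    rw [LinearMap.sum_apply]
    rfl
  have hFrefl : ∀ a ∈ J, ∀ v : V,
      F (R.refl a.1 v) = F v + (Fn.card : ℚ) * ((a.2 : ℚ) * R.pairing a.1 v) := by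
    intro a ha v
    have hra : R.affRefl a ∈ Submonoid.closure gens :=
      Submonoid.subset_closure ⟨a, ha, rfl⟩
    have hrr : R.affRefl a * R.affRefl a = 1 :=
      LinearMap.ext (R.affRefl_invol (haΦ a ha))
    have key : ∀ g ∈ Fn, (g ((R.refl a.1 v, 0) : V × ℚ)).2 =
        ((g * R.affRefl a) ((v, 0) : V × ℚ)).2 + (a.2 : ℚ) * R.pairing a.1 v := by
      intro g hg
      have hgG : g ∈ Submonoid.closure gens := (hmemFn g).mp hg
      have e1 : ((R.refl a.1 v, 0) : V × ℚ) =
          R.affRefl a ((v, 0) : V × ℚ) + (0, (a.2 : ℚ) * R.pairing a.1 v) := by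
        rw [R.affRefl_apply]
        ext <;> simp
      rw [e1, hP g hgG, Module.End.mul_apply]
      simp
    have hsum : ∑ g ∈ Fn, ((g * R.affRefl a) ((v, 0) : V × ℚ)).2
        = ∑ g ∈ Fn, (g ((v, 0) : V × ℚ)).2 := by
      apply Finset.sum_nbij' (fun g => g * R.affRefl a) (fun g => g * R.affRefl a)
      · intro g hg
        exact (hmemFn _).mpr (mul_mem ((hmemFn g).mp hg) hra)
      · intro g hg
        exact (hmemFn _).mpr (mul_mem ((hmemFn g).mp hg) hra)
      · intro g _; rw [mul_assoc, hrr, mul_one]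
      · intro g _; rw [mul_assoc, hrr, mul_one]
      · intro g _; rfl
    rw [hFapp, hFapp, Finset.sum_congr rfl key, Finset.sum_add_distrib, hsum,
      Finset.sum_const, nsmul_eq_mul]
  have hFgen : ∀ a ∈ J, F a.1 = -((Fn.card : ℚ) * a.2) := by
    intro a ha
    have h1 := hFrefl a ha a.1
    rw [R.refl_self (haΦ a ha), map_neg, R.pairing_self a.1 (haΦ a ha)] at h1
    linarith
  -- induction over the monoid generated by cl(J)
  have hQ : ∀ x ∈ AddSubmonoid.closure (Prod.fst '' J), F x ≤ 0 ∧
      (F x = 0 → x ∈ AddSubmonoid.closure ((Prod.fst '' J) ∩ R.pos)) := by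
    intro x hx
    induction hx using AddSubmonoid.closure_induction with
    | mem y hy =>
      obtain ⟨a, ha, rfl⟩ := hy
      have hF1 := hFgen a ha
      have h2 : (0 : ℚ) ≤ (a.2 : ℚ) := by exact_mod_cast ha2 a ha
      have hN : (0 : ℚ) < (Fn.card : ℚ) := by exact_mod_cast hNpos
      constructor
      · rw [hF1]; nlinarith
      · intro h0
        rw [hF1] at h0
        have ha20 : (a.2 : ℚ) = 0 := by
          rcases mul_eq_zero.mp (neg_eq_zero.mp h0) with h | h
          · exact absurd h hN.ne'
          · exact h
        have ha2z : a.2 = 0 := by exact_mod_cast ha20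
        have hind : R.ind (-a.1) = 0 := by
          have := ((hJ.1 a ha).1).2
          have := R.ind_nonneg (-a.1)
          omega
        have hnpos : -a.1 ∉ R.pos := by
          intro hmem
          rw [ind, if_pos hmem] at hind
          norm_num at hind
        have hpos : a.1 ∈ R.pos := (R.mem_pos_or_neg a.1 (haΦ a ha)).resolve_right hnpos
        exact AddSubmonoid.subset_closure ⟨Set.mem_image_of_mem _ ha, hpos⟩
    | zero =>
      refine ⟨by simp, fun _ => zero_mem _⟩
    | add x y hxM hyM ihx ihy =>
      refine ⟨by rw [map_add]; linarith [ihx.1, ihy.1], fun h0 => ?_⟩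
      rw [map_add] at h0
      have hx0 : F x = 0 := by linarith [ihx.1, ihy.1]
      have hy0 : F y = 0 := by linarith [ihx.1, ihy.1]
      exact add_mem (ihx.2 hx0) (ihy.2 hy0)
  have hQβ := hQ β hβM
  have hQnβ := hQ (-β) hnβM
  have hsum0 : F β + F (-β) = 0 := by rw [map_neg]; ring
  have hFβ0 : F β = 0 := by linarith [hQβ.1, hQnβ.1]
  have hFnβ0 : F (-β) = 0 := by linarith
  obtain ⟨l1, hl1, hl1s⟩ := AddSubmonoid.exists_list_of_mem_closure (hQβ.2 hFβ0)
  obtain ⟨l2, hl2, hl2s⟩ := AddSubmonoid.exists_list_of_mem_closure (hQnβ.2 hFnβ0)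
  have hlen : (l1 ++ l2).length ≤ (l1 ++ l2).length := le_rfl
  have hall : ∀ x ∈ l1 ++ l2, x ∈ R.pos := by
    intro x hx
    rcases List.mem_append.mp hx with h | h
    · exact (hl1 x h).2
    · exact (hl2 x h).2
  have hs0 : (l1 ++ l2).sum = 0 := by rw [List.sum_append, hl1s, hl2s]; simp
  have := R.no_zero_sum (l1 ++ l2).length (l1 ++ l2) hlen hall hs0
  rw [List.append_eq_nil_iff] at this
  have : l1 = [] := this.1
  rw [this] at hl1s
  simp at hl1s
  exact hβ0 hl1s.symm

lemma weyl_maps {f : Module.End ℚ V} (hf : R.IsWeyl f) : ∀ x ∈ R.Φ, f x ∈ R.Φ := by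
  induction hf using Submonoid.closure_induction with
  | mem g hg =>
    obtain ⟨α, hα, rfl⟩ := hg
    exact fun x hx => R.refl_mem (R.pos_sub hα) hx
  | one => intro x hx; simpa using hx
  | mul g g' _ _ ihg ihg' =>
    intro x hx
    rw [Module.End.mul_apply]
    exact ihg _ (ihg' _ hx)

/-- If `β ∈ Φ⁺_J` and `w⁻¹β ∈ Φ⁻`, then `ᴶℓ(s_β w) < ᴶℓ(w)`. -/
theorem semiAffLen_lt (J : Set (V × ℤ)) (hJ : R.IsRegularAff J)
    (w winv : Module.End ℚ V) (hw : R.IsWeyl w) (h₁ : w * winv = 1)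
    (h₂ : winv * w = 1) (β : V) (hβ : β ∈ R.subPos J) (hneg : winv β ∉ R.pos) :
    R.semiAffLen J (winv * R.refl β) < R.semiAffLen J winv := by
  have hβΦ : β ∈ R.Φ := hβ.1
  have hβM : β ∈ AddSubmonoid.closure (Prod.fst '' J) := hβ.2
  -- `w` preserves `Φ`
  have hwΦ : ∀ x ∈ R.Φ, w x ∈ R.Φ := R.weyl_maps hw
  -- `winv` preserves `Φ`
  have hwinvΦ : ∀ x ∈ R.Φ, winv x ∈ R.Φ := by
    have hinj : Set.InjOn w R.Φ := by
      intro a _ b _ h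
      have h3 := congrArg winv h
      rwa [← Module.End.mul_apply, ← Module.End.mul_apply, h₂, Module.End.one_apply,
        Module.End.one_apply] at h3
    have hmaps : Set.MapsTo w R.Φ R.Φ := fun a ha => hwΦ a ha
    have hsurj : Set.SurjOn w R.Φ R.Φ :=
      ((Set.Finite.injOn_iff_bijOn_of_mapsTo R.finite hmaps).mp hinj).surjOn
    intro x hx
    obtain ⟨y, hy, hyx⟩ := hsurj hx
    have : winv x = y := by
      rw [← hyx, ← Module.End.mul_apply, h₂, Module.End.one_apply]
    rw [this]
    exact hy
  have hwinvβΦ : winv β ∈ R.Φ := hwinvΦ β hβΦ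
  have hnegβpos : -(winv β) ∈ R.pos := (R.mem_pos_or_neg _ hwinvβΦ).resolve_left hneg
  set A := {γ | γ ∈ R.subPos J ∧ winv γ ∉ R.pos} with hA
  set B := {γ | γ ∈ R.subPos J ∧ (winv * R.refl β) γ ∉ R.pos} with hB
  have hAfin : A.Finite := R.finite.subset (fun γ hγ => hγ.1.1)
  have hBfin : B.Finite := R.finite.subset (fun γ hγ => hγ.1.1)
  have hβA : β ∈ A := ⟨hβ, hneg⟩
  -- one `neg_add_neg` step along `β`
  have step : ∀ x : V, x ∈ R.Φ → winv x ∉ R.pos → x + β ∈ R.Φ → winv (x + β) ∉ R.pos := by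
    intro x hxΦ hxneg hxβΦ
    rw [map_add]
    refine R.neg_add_neg (hwinvΦ x hxΦ) hxneg hwinvβΦ hneg ?_
    rw [← map_add]
    exact hwinvΦ _ hxβΦ
  -- the key claim: a root of `B` whose reflection leaves `Φ⁺_J` already lies in `A`
  have hclaim : ∀ γ, γ ∈ B → R.refl β γ ∉ R.subPos J → winv γ ∉ R.pos := by
    intro γ hγB hrp
    obtain ⟨hγP, hγneg⟩ := hγB
    have hγΦ : γ ∈ R.Φ := hγP.1
    have hγM : γ ∈ AddSubmonoid.closure (Prod.fst '' J) := hγP.2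
    have hγneg' : winv (R.refl β γ) ∉ R.pos := by rwa [Module.End.mul_apply] at hγneg
    have hrβγΦ : R.refl β γ ∈ R.Φ := R.refl_mem hβΦ hγΦ
    have hγneβ : γ ≠ β := by
      rintro rfl
      apply hγneg'
      rw [R.refl_self hβΦ, map_neg]
      exact hnegβpos
    have hγnenβ : γ ≠ -β := by
      rintro rfl
      exact R.not_both_subPos hJ hβ hγP
    obtain ⟨k, hk⟩ := R.pairing_int β hβΦ γ hγΦ
    have hk1 : 1 ≤ k := by
      by_contra hlt
      push_neg at hlt
      apply hrp
      refine ⟨hrβγΦ, ?_⟩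
      have hcast : (((-k).toNat : ℕ) : ℚ) = -(k : ℚ) := by
        have h5 := Int.toNat_of_nonneg (by omega : (0:ℤ) ≤ -k)
        exact_mod_cast congrArg (fun z : ℤ => (z : ℚ)) h5
      have he : R.refl β γ = γ + ((-k).toNat : ℕ) • β := by
        rw [R.refl_apply, hk, ← Nat.cast_smul_eq_nsmul ℚ, hcast]
        module
      rw [he]
      exact AddSubmonoid.add_mem _ hγM (AddSubmonoid.nsmul_mem _ hβM _)
    have hdep : ∀ c : ℚ, γ ≠ c • β := by
      intro c hc
      rcases R.reduced β hβΦ c (hc ▸ hγΦ) with h | h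
      · exact hγneβ (by rw [hc, h, one_smul])
      · exact hγnenβ (by rw [hc, h, neg_one_smul])
    obtain ⟨m, hm⟩ := R.pairing_int γ hγΦ β hβΦ
    obtain ⟨hm1, hkm⟩ := R.pairing_bounds hβΦ hγΦ hdep k m hk hm hk1
    have hk3 : k ≤ 3 := by nlinarith
    -- `γ - β` is a root as soon as `2 ≤ k` (then `m = 1`)
    have hsub1 : 2 ≤ k → γ - β ∈ R.Φ := by
      intro h2
      have hmeq : m = 1 := by nlinarith
      have h5 := R.reflect_mem γ hγΦ β hβΦ
      rw [hm, hmeq] at h5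
      norm_num at h5
      have h6 := R.neg_mem _ h5
      rwa [neg_sub] at h6
    interval_cases k
    · -- k = 1
      have e1 : R.refl β γ = γ - β := by
        rw [R.refl_apply, hk]; norm_num
      have hγ1Φ : γ - β ∈ R.Φ := e1 ▸ hrβγΦ
      have hs1 : winv (γ - β) ∉ R.pos := by rwa [e1] at hγneg'
      have h7 := step (γ - β) hγ1Φ hs1 (by simpa using hγΦ)
      simpa using h7
    · -- k = 2
      have e2 : R.refl β γ = γ - β - β := by
        rw [R.refl_apply, hk]; push_cast; module
      have hγ1Φ : γ - β ∈ R.Φ := hsub1 (by norm_num)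
      have hγ2Φ : γ - β - β ∈ R.Φ := e2 ▸ hrβγΦ
      have hs2 : winv (γ - β - β) ∉ R.pos := by rwa [e2] at hγneg'
      have h7 := step (γ - β - β) hγ2Φ hs2 (by simpa using hγ1Φ)
      rw [sub_add_cancel] at h7
      have h8 := step (γ - β) hγ1Φ h7 (by simpa using hγΦ)
      simpa using h8
    · -- k = 3
      have hγ1Φ : γ - β ∈ R.Φ := hsub1 (by norm_num)
      have hpair1 : R.pairing β (γ - β) = 1 := by
        rw [map_sub, hk, R.pairing_self β hβΦ]; norm_num
      have hγ2Φ : γ - β - β ∈ R.Φ := by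
        have h5 := R.reflect_mem β hβΦ (γ - β) hγ1Φ
        rwa [hpair1, one_smul] at h5
      have e3 : R.refl β γ = γ - β - β - β := by
        rw [R.refl_apply, hk]; push_cast; module
      have hγ3Φ : γ - β - β - β ∈ R.Φ := e3 ▸ hrβγΦ
      have hs3 : winv (γ - β - β - β) ∉ R.pos := by rwa [e3] at hγneg'
      have h7 := step (γ - β - β - β) hγ3Φ hs3 (by simpa using hγ2Φ)
      rw [sub_add_cancel] at h7
      have h8 := step (γ - β - β) hγ2Φ h7 (by simpa using hγ1Φ)
      rw [sub_add_cancel] at h8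
      have h9 := step (γ - β) hγ1Φ h8 (by simpa using hγΦ)
      simpa using h9
  -- the injection
  set ψ : V → V := fun γ => if R.refl β γ ∈ R.subPos J then R.refl β γ else γ with hψdef
  have himg : ∀ γ ∈ B, ψ γ ∈ A \ {β} := by
    intro γ hγB
    obtain ⟨hγP, hγneg⟩ := hγB
    have hγΦ : γ ∈ R.Φ := hγP.1
    have hγneg' : winv (R.refl β γ) ∉ R.pos := by rwa [Module.End.mul_apply] at hγneg
    by_cases hc : R.refl β γ ∈ R.subPos J
    · have hψγ : ψ γ = R.refl β γ := if_pos hc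
      rw [hψγ]
      refine ⟨⟨hc, hγneg'⟩, ?_⟩
      intro hmem
      have heq : R.refl β γ = β := hmem
      have : γ = -β := by
        have h5 := congrArg (R.refl β) heq
        rwa [R.refl_refl_self hβΦ, R.refl_self hβΦ] at h5
      exact R.not_both_subPos hJ hβ (this ▸ hγP)
    · have hψγ : ψ γ = γ := if_neg hc
      rw [hψγ]
      refine ⟨⟨hγP, hclaim γ ⟨hγP, hγneg⟩ hc⟩, ?_⟩
      intro hmem
      have heq : γ = β := hmem
      apply hγneg'
      rw [heq, R.refl_self hβΦ, map_neg]
      exact hnegβpos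
  have hinj : Set.InjOn ψ B := by
    intro γ1 hγ1 γ2 hγ2 he
    by_cases h1 : R.refl β γ1 ∈ R.subPos J <;> by_cases h2 : R.refl β γ2 ∈ R.subPos J
    · rw [hψdef] at he
      simp only [if_pos h1, if_pos h2] at he
      have h5 := congrArg (R.refl β) he
      rwa [R.refl_refl_self hβΦ, R.refl_refl_self hβΦ] at h5
    · rw [hψdef] at he
      simp only [if_pos h1, if_neg h2] at he
      exfalso
      apply h2
      have : R.refl β γ2 = γ1 := by
        rw [← he, R.refl_refl_self hβΦ]
      rw [this]
      exact hγ1.1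
    · rw [hψdef] at he
      simp only [if_neg h1, if_pos h2] at he
      exfalso
      apply h1
      have : R.refl β γ1 = γ2 := by
        rw [he, R.refl_refl_self hβΦ]
      rw [this]
      exact hγ2.1
    · rw [hψdef] at he
      simpa only [if_neg h1, if_neg h2] using he
  have himg' : ψ '' B ⊆ A \ {β} := by
    rintro x ⟨γ, hγ, rfl⟩
    exact himg γ hγ
  have hlt : B.ncard < A.ncard := by
    calc B.ncard = (ψ '' B).ncard := (Set.ncard_image_of_injOn hinj).symm
      _ ≤ (A \ {β}).ncard := Set.ncard_le_ncard himg' (hAfin.diff)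
      _ < A.ncard := Set.ncard_diff_singleton_lt_of_mem hβA hAfin
  exact hlt

end RootSystemData
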